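/- Let H be the A_∞-algebra over F_2 whose underlying module is spanned by idempotents ε_i (degree 0) and arrows α_i: i → i+1 (for i ∈ ℤ/n, n ≥ 2, arrows in degree suitable so that μ_n has degree 2−n applied to degree-1 inputs gives degree 0), with all products of two arrows zero, ε's acting as units, and the single nontrivial higher operation μ_n(α_{i+n−1} ⊗ … ⊗ α_{i+1} ⊗ α_i) = ε_i for each i ∈ ℤ/n, all other μ_k (k ≥ 3) zero on words of arrows. Then the A_∞-relations (Stasheff identities) hold for H. In particular the only identities to check are those involving one μ_n and one μ_2, and these hold because ε_i α_{i+n−1}… and …α_i ε_i contributions cancel in characteristic 2. -/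

import Mathlib

namespace Stmt17

/-- Basis indices of the minimal model `H` of the θ_n-Legendrian: `Sum.inl i` is the
idempotent `ε_i`, `Sum.inr i` is the arrow `α_i : i → i+1` of the cyclic quiver on `ℤ/n`. -/
abbrev Idx (n : ℕ) := ZMod n ⊕ ZMod n

/-- The underlying `F₂`-module of the minimal model. -/
abbrev H (n : ℕ) := Idx n →₀ ZMod 2

/-- The multiplication `μ₂` on basis elements: the path algebra of the cyclic quiver on
`ℤ/n` with all length-2 paths (products of two arrows) equal to zero, with
`ε_{i+1} α_i = α_i = α_i ε_i`. -/
noncomputable def basisMul (n : ℕ) : Idx n → Idx n → H n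
  | Sum.inl i, Sum.inl j => if i = j then Finsupp.single (Sum.inl i) 1 else 0
  | Sum.inl i, Sum.inr j => if i = j + 1 then Finsupp.single (Sum.inr j) 1 else 0
  | Sum.inr i, Sum.inl j => if i = j then Finsupp.single (Sum.inr i) 1 else 0
  | Sum.inr _, Sum.inr _ => 0

/-- The disk word `α_{i+n-1} ⊗ … ⊗ α_{i+1} ⊗ α_i` (written as a list, leftmost first). -/
def diskWord (n : ℕ) (i : ZMod n) : List (Idx n) :=
  (List.range n).map fun t => Sum.inr (i + ((n - 1 - t : ℕ) : ZMod n))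

open scoped Classical in
/-- The operations `μ_k` of the minimal model, on lists of basis elements: `μ₁ = 0`,
`μ₂` is the multiplication, and for `k ≥ 3` the only nonzero higher operation is
`μ_n(α_{i+n-1} ⊗ … ⊗ α_{i+1} ⊗ α_i) = ε_i`. -/
noncomputable def muHat (n : ℕ) (L : List (Idx n)) : H n :=
  if hL : L.length = 2 then
    basisMul n (L.get ⟨0, by omega⟩) (L.get ⟨1, by omega⟩)
  else if h : 3 ≤ n ∧ ∃ i : ZMod n, L = diskWord n i then
    Finsupp.single (Sum.inl h.2.choose) 1
  else 0

/-- Evaluation of `μ` on a list of basis elements with one general element of `H`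
inserted (the multilinear extension in that slot). -/
noncomputable def muSlot (n : ℕ) (L1 : List (Idx n)) (x : H n) (L2 : List (Idx n)) : H n :=
  x.sum fun b c => c • muHat n (L1 ++ b :: L2)

-- basic lemmas
lemma H_add_self {n : ℕ} (x : H n) : x + x = 0 := by
  ext a
  simp only [Finsupp.add_apply, Finsupp.coe_zero, Pi.zero_apply]
  exact CharTwo.add_self_eq_zero _

lemma diskWord_length (n : ℕ) (i : ZMod n) : (diskWord n i).length = n := by
  simp [diskWord]

lemma diskWord_getElem (n : ℕ) (i : ZMod n) (t : ℕ) (ht : t < n) :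
    (diskWord n i)[t]'(by simp [diskWord_length, ht]) =
      Sum.inr (i + ((n - 1 - t : ℕ) : ZMod n)) := by
  simp [diskWord]

lemma inl_not_mem_diskWord {n : ℕ} {i : ZMod n} (m : ZMod n) :
    Sum.inl m ∉ diskWord n i := by
  simp [diskWord]

lemma diskWord_inj {n : ℕ} (hn : 1 ≤ n) {i j : ZMod n}
    (h : diskWord n i = diskWord n j) : i = j := by
  have h1 : (diskWord n i)[n-1]'(by simp [diskWord_length]; omega) =
      (diskWord n j)[n-1]'(by simp [diskWord_length]; omega) := by
    congr 1
  rw [diskWord_getElem n i (n-1) (by omega), diskWord_getElem n j (n-1) (by omega)] at h1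
  simpa using h1

lemma diskWord_ext {n : ℕ} {M : List (Idx n)} {i : ZMod n} (hM : M.length = n)
    (h : ∀ t (ht : t < n), M[t]'(by omega) = Sum.inr (i + ((n - 1 - t : ℕ) : ZMod n))) :
    M = diskWord n i := by
  apply List.ext_getElem (by simp [hM, diskWord_length])
  intro t h1 h2
  rw [h t (by omega), diskWord_getElem n i t (by omega)]

lemma muHat_pair (n : ℕ) (a b : Idx n) : muHat n [a, b] = basisMul n a b := by
  simp [muHat]

lemma muHat_diskWord {n : ℕ} (hn : 3 ≤ n) (i : ZMod n) :
    muHat n (diskWord n i) = Finsupp.single (Sum.inl i) 1 := by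
  have hlen : (diskWord n i).length = n := diskWord_length n i
  rw [muHat]
  rw [dif_neg (by omega)]
  have h : 3 ≤ n ∧ ∃ j : ZMod n, diskWord n i = diskWord n j := ⟨hn, i, rfl⟩
  rw [dif_pos h]
  congr 2
  exact (diskWord_inj (by omega) h.2.choose_spec).symm

lemma muHat_eq_zero {n : ℕ} {L : List (Idx n)} (h2 : L.length ≠ 2)
    (hd : ∀ i : ZMod n, L ≠ diskWord n i) : muHat n L = 0 := by
  rw [muHat, dif_neg h2, dif_neg]
  rintro ⟨-, i, hi⟩
  exact hd i hi

lemma muHat_eq_zero_of_inl_mem {n : ℕ} {L : List (Idx n)} {m : ZMod n}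
    (h2 : L.length ≠ 2) (hm : Sum.inl m ∈ L) : muHat n L = 0 := by
  apply muHat_eq_zero h2
  intro i hi
  rw [hi] at hm
  exact inl_not_mem_diskWord m hm

lemma muSlot_zero (n : ℕ) (L1 L2 : List (Idx n)) : muSlot n L1 0 L2 = 0 := by
  simp [muSlot]

lemma muSlot_single (n : ℕ) (L1 L2 : List (Idx n)) (b : Idx n) :
    muSlot n L1 (Finsupp.single b 1) L2 = muHat n (L1 ++ b :: L2) := by
  rw [muSlot, Finsupp.sum_single_index (by simp), one_smul]

lemma muSlot_eq_zero {n : ℕ} {L1 L2 : List (Idx n)} (x : H n)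
    (h : ∀ b, muHat n (L1 ++ b :: L2) = 0) : muSlot n L1 x L2 = 0 := by
  rw [muSlot]
  apply Finset.sum_eq_zero
  intro b _
  simp only [h b, smul_zero]

lemma basisMul_cases (n : ℕ) (a b : Idx n) :
    basisMul n a b = 0 ∨ ∃ d, basisMul n a b = Finsupp.single d 1 := by
  rcases a with i | i <;> rcases b with j | j <;> simp only [basisMul] <;>
    first
    | (split_ifs <;> [(right; exact ⟨_, rfl⟩); (left; rfl)])
    | tauto

lemma muHat_ne_zero {n : ℕ} {L : List (Idx n)} (h : muHat n L ≠ 0) :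
    (∃ a b, L = [a, b]) ∨ (3 ≤ n ∧ L.length ≠ 2 ∧ ∃ i, L = diskWord n i) := by
  by_cases h2 : L.length = 2
  · left
    match L, h2 with
    | [a, b], _ => exact ⟨a, b, rfl⟩
  · right
    rw [muHat, dif_neg h2] at h
    by_cases hd : 3 ≤ n ∧ ∃ i : ZMod n, L = diskWord n i
    · exact ⟨hd.1, h2, hd.2⟩
    · rw [dif_neg hd] at h; exact absurd rfl h


lemma cast_pred {n : ℕ} (hn : 1 ≤ n) : ((n - 1 : ℕ) : ZMod n) = -1 := by
  have h : (((n - 1) + 1 : ℕ) : ZMod n) = 0 := by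
    have : n - 1 + 1 = n := by omega
    rw [this, ZMod.natCast_self]
  push_cast at h
  linear_combination h

lemma take2_drop {n : ℕ} (L : List (Idx n)) (r : ℕ) (h : r + 1 < L.length) :
    (L.drop r).take 2 = [L[r]'(by omega), L[r+1]'(by omega)] := by
  rw [List.drop_eq_getElem_cons (by omega), List.drop_eq_getElem_cons (by omega)]
  rfl

lemma assoc3 {n : ℕ} (a b c : Idx n) :
    muSlot n [] (muHat n [a, b]) [c] + muSlot n [a] (muHat n [b, c]) [] = 0 := by
  rcases a with i | i <;> rcases b with j | j <;> rcases c with l | l <;>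
    simp only [muHat_pair, basisMul] <;>
    first
    | (split_ifs <;>
        simp_all [muSlot_zero, muSlot_single, muHat_pair, basisMul, H_add_self] <;>
        (try split_ifs) <;> simp_all [H_add_self])
    | simp [muSlot_zero]


lemma T_vanish {n : ℕ} (L : List (Idx n)) (r s : ℕ)
    (hr : r ≤ L.length) (hs1 : 1 ≤ s) (hs2 : s ≤ L.length - r)
    (hA : ¬(s = 2 ∧ (L.length = 3 ∨ L.length = n + 1)))
    (hB : ¬(s = n ∧ L.length = n + 1)) :
    muSlot n (L.take r) (muHat n ((L.drop r).take s)) (L.drop (r + s)) = 0 := by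
  set k := L.length with hk
  set W := (L.drop r).take s with hWdef
  have hW : W.length = s := by
    simp only [hWdef, List.length_take, List.length_drop]
    omega
  by_cases h0 : muHat n W = 0
  · rw [h0, muSlot_zero]
  rcases muHat_ne_zero h0 with ⟨a, b, hab⟩ | ⟨h3, hne2, i, hdw⟩
  · have hs : s = 2 := by rw [hab] at hW; simpa using hW.symm
    have hk3 : k ≠ 3 ∧ k ≠ n + 1 := by
      constructor <;> intro hh <;> exact hA ⟨hs, by omega⟩
    rw [hab, muHat_pair]
    rcases basisMul_cases n a b with hz | ⟨d, hd⟩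
    · rw [hab, muHat_pair] at h0; exact absurd hz h0
    · rw [hd, muSlot_single]
      apply muHat_eq_zero
      · simp only [List.length_append, List.length_cons, List.length_take,
          List.length_drop]
        omega
      · intro j hj
        have := congrArg List.length hj
        simp only [List.length_append, List.length_cons, List.length_take,
          List.length_drop, diskWord_length] at this
        omega
  · have hs : s = n := by rw [hdw] at hW; rw [diskWord_length] at hW; omega
    have hkn : k ≠ n + 1 := fun hh => hB ⟨hs, hh⟩
    rw [hdw, muHat_diskWord h3, muSlot_single]
    apply muHat_eq_zero_of_inl_mem
    · simp only [List.length_append, List.length_cons, List.length_take,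
        List.length_drop]
      omega
    · exact List.mem_append_right _ List.mem_cons_self


lemma cast_eq_of {n : ℕ} (a b : ℕ) (h : a = b ∨ a = b + n ∨ b = a + n) :
    ((a : ℕ) : ZMod n) = ((b : ℕ) : ZMod n) := by
  rcases h with h | h | h <;> subst h <;>
    simp [Nat.cast_add, ZMod.natCast_self]

lemma take1 {n : ℕ} (L : List (Idx n)) (h : 0 < L.length) : L.take 1 = [L[0]'h] := by
  rw [show (1 : ℕ) = 0 + 1 from rfl, List.take_succ]
  simp [List.getElem?_eq_getElem h]

lemma dropn_singleton {n : ℕ} {L : List (Idx n)} (h : L.length = n + 1) :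
    L.drop n = [L[n]'(by omega)] := by
  rw [List.drop_eq_getElem_cons (by omega), List.drop_eq_nil_of_le (by omega)]

lemma entry_take {n : ℕ} {L : List (Idx n)} {i : ZMod n} (hnL : n ≤ L.length)
    (h : L.take n = diskWord n i) (q : ℕ) (hq : q < n) :
    L[q]'(by omega) = Sum.inr (i + ((n - 1 - q : ℕ) : ZMod n)) := by
  have h1 : (L.take n)[q]'(by rw [List.length_take]; omega) = L[q]'(by omega) :=
    List.getElem_take
  rw [← h1]
  simp only [h]
  rw [diskWord_getElem n i q hq]

lemma entry_drop1 {n : ℕ} {L : List (Idx n)} {j : ZMod n} (hL : L.length = n + 1)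
    (h : L.drop 1 = diskWord n j) (q : ℕ) (hq : q < n) :
    L[1 + q]'(by omega) = Sum.inr (j + ((n - 1 - q : ℕ) : ZMod n)) := by
  have h1 : (L.drop 1)[q]'(by rw [List.length_drop]; omega) = L[1 + q]'(by omega) :=
    List.getElem_drop
  rw [← h1]
  simp only [h]
  rw [diskWord_getElem n j q hq]


lemma getElem_congr {n : ℕ} (L : List (Idx n)) (a b : ℕ) (hab : a = b) (h1 : a < L.length) :
    L[a]'h1 = L[b]'(hab ▸ h1) := by subst hab; rfl

lemma drop1_diskWord {n : ℕ} (hn : 3 ≤ n) {L : List (Idx n)} (hL : L.length = n + 1)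
    {i : ZMod n} (hd : L.take n = diskWord n i)
    (hlast : L[n]'(by omega) = Sum.inr (i + ((n - 1 : ℕ) : ZMod n))) :
    L.drop 1 = diskWord n (i + ((n - 1 : ℕ) : ZMod n)) := by
  apply diskWord_ext (by rw [List.length_drop]; omega)
  intro q hq
  have h1 : (L.drop 1)[q]'(by rw [List.length_drop]; omega) = L[1 + q]'(by omega) :=
    List.getElem_drop
  rw [h1]
  by_cases hq' : 1 + q < n
  · rw [entry_take (by omega) hd (1 + q) hq']
    congr 1
    have e : ((n - 1 : ℕ) : ZMod n) + ((n - 1 - q : ℕ) : ZMod n)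
        = ((n - 1 - (1 + q) : ℕ) : ZMod n) := by
      rw [← Nat.cast_add]; exact cast_eq_of _ _ (by omega)
    linear_combination - e
  · rw [getElem_congr L (1 + q) n (by omega), hlast]
    congr 1
    rw [show n - 1 - q = 0 from by omega]
    simp

lemma take_diskWord {n : ℕ} (hn : 3 ≤ n) {L : List (Idx n)} (hL : L.length = n + 1)
    {j : ZMod n} (hd : L.drop 1 = diskWord n j) (h0 : L[0]'(by omega) = Sum.inr j) :
    L.take n = diskWord n (j + 1) := by
  apply diskWord_ext (by rw [List.length_take]; omega)
  intro q hq
  have h1 : (L.take n)[q]'(by rw [List.length_take]; omega) = L[q]'(by omega) :=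
    List.getElem_take
  rw [h1]
  rcases Nat.eq_zero_or_pos q with rfl | hq0
  · rw [h0]
    congr 1
    simp only [Nat.sub_zero]
    rw [cast_pred (by omega)]
    ring
  · rw [getElem_congr L q (1 + (q - 1)) (by omega), entry_drop1 hL hd (q - 1) (by omega)]
    congr 1
    have e : ((n - 1 - (q - 1) : ℕ) : ZMod n) = ((1 + (n - 1 - q) : ℕ) : ZMod n) :=
      cast_eq_of _ _ (by omega)
    rw [Nat.cast_add, Nat.cast_one] at e
    linear_combination e

lemma cast_sub' {n k : ℕ} (h : k ≤ n) : ((n - k : ℕ) : ZMod n) = -(k : ℕ) := by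
  have h2 : (((n - k) + k : ℕ) : ZMod n) = 0 := by
    rw [show n - k + k = n from by omega, ZMod.natCast_self]
  push_cast at h2 ⊢
  linear_combination h2

lemma drop1_forces {n : ℕ} (hn : 3 ≤ n) {L : List (Idx n)} (hL : L.length = n + 1)
    {i j : ZMod n} (hT : L.take n = diskWord n i) (hD : L.drop 1 = diskWord n j) :
    j = i + ((n - 1 : ℕ) : ZMod n)
      ∧ L[n]'(by omega) = Sum.inr (i + ((n - 1 : ℕ) : ZMod n)) := by
  have e1 := entry_take (n := n) (by omega) hT 1 (by omega)
  have e2 := entry_drop1 hL hD 0 (by omega)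
  rw [getElem_congr L 1 (1 + 0) (by omega)] at e1
  rw [e1] at e2
  have e3 : i + ((n - 1 - 1 : ℕ) : ZMod n) = j + ((n - 1 - 0 : ℕ) : ZMod n) := by
    injection e2
  rw [show n - 1 - 1 = n - 2 from by omega, show n - 1 - 0 = n - 1 from by omega] at e3
  rw [cast_sub' (show 2 ≤ n by omega), cast_sub' (show 1 ≤ n by omega)] at e3
  push_cast at e3
  have hj : j = i + ((n - 1 : ℕ) : ZMod n) := by
    rw [cast_sub' (show 1 ≤ n by omega)]
    push_cast
    linear_combination -e3
  refine ⟨hj, ?_⟩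
  have e5 := entry_drop1 hL hD (n - 1) (by omega)
  rw [getElem_congr L (1 + (n - 1)) n (by omega)] at e5
  rw [e5, hj]
  congr 1
  rw [show n - 1 - (n - 1) = 0 from by omega]
  simp


lemma core_allR {n : ℕ} (hn : 3 ≤ n) (L : List (Idx n)) (hL : L.length = n + 1)
    (hall : ∀ q (hq : q < n + 1), (L[q]'(by omega)).isRight) :
    muSlot n [] (muHat n (L.take n)) (L.drop n) +
      muSlot n (L.take 1) (muHat n (L.drop 1)) [] = 0 := by
  obtain ⟨t, ht⟩ := Sum.isRight_iff.mp (hall n (by omega))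
  have hdropn : L.drop n = [L[n]'(by omega)] := dropn_singleton hL
  have hlen1 : (L.take n).length = n := by rw [List.length_take]; omega
  have hlend : (L.drop 1).length = n := by rw [List.length_drop]; omega
  have hc : ((n - 1 : ℕ) : ZMod n) = -1 := by
    rw [cast_sub' (show 1 ≤ n by omega)]; push_cast; ring
  by_cases hdw : ∃ i, L.take n = diskWord n i
  · obtain ⟨i, hi⟩ := hdw
    by_cases hit : t = i + ((n - 1 : ℕ) : ZMod n)
    · have hD : L.drop 1 = diskWord n (i + ((n - 1 : ℕ) : ZMod n)) :=
        drop1_diskWord hn hL hi (by rw [ht, hit])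
      have h0 : L[0]'(by omega) = Sum.inr (i + ((n - 1 : ℕ) : ZMod n)) := by
        rw [entry_take (by omega) hi 0 (by omega)]
        simp only [Nat.sub_zero]
      rw [hi, hD, muHat_diskWord hn, muHat_diskWord hn, hdropn, ht, muSlot_single,
        take1 L (by omega), muSlot_single, List.nil_append, h0,
        List.singleton_append, muHat_pair, muHat_pair]
      simp only [basisMul]
      rw [if_pos (show i = t + 1 by rw [hit, hc]; ring)]
      rw [if_pos trivial, hit]
      exact H_add_self _
    · -- L[n] = inr t with t ≠ i - 1 : both terms vanish
      have hz : muHat n (L.drop 1) = 0 := by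
        apply muHat_eq_zero (by omega)
        intro j hj
        obtain ⟨-, hforce⟩ := drop1_forces hn hL hi hj
        rw [ht] at hforce
        exact hit (by injection hforce)
      rw [hi, muHat_diskWord hn, hdropn, ht, muSlot_single, hz, muSlot_zero,
        List.nil_append, muHat_pair]
      simp only [basisMul]
      rw [if_neg (show ¬ i = t + 1 by
        intro hcon
        exact hit (by rw [hc]; linear_combination -hcon))]
      simp
  · have hz1 : muHat n (L.take n) = 0 :=
      muHat_eq_zero (by omega) (fun i hi => hdw ⟨i, hi⟩)
    rw [hz1, muSlot_zero, zero_add]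
    by_cases hdw1 : ∃ j, L.drop 1 = diskWord n j
    · obtain ⟨j, hj⟩ := hdw1
      obtain ⟨u, hu⟩ := Sum.isRight_iff.mp (hall 0 (by omega))
      rw [hj, muHat_diskWord hn, take1 L (by omega), muSlot_single, hu,
        List.singleton_append, muHat_pair]
      simp only [basisMul]
      rw [if_neg]
      intro huj
      exact hdw ⟨j + 1, take_diskWord hn hL hj (by rw [hu, huj])⟩
    · rw [muHat_eq_zero (by omega) (fun j hj => hdw1 ⟨j, hj⟩), muSlot_zero]


lemma muHat_take_zero {n : ℕ} (hn : 3 ≤ n) {L : List (Idx n)} (hL : L.length = n + 1)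
    (p : ℕ) (hp : p < n) (m : ZMod n) (h : L[p]'(by omega) = Sum.inl m) :
    muHat n (L.take n) = 0 := by
  apply muHat_eq_zero_of_inl_mem (m := m) (by rw [List.length_take]; omega)
  rw [List.mem_take_iff_getElem]
  exact ⟨p, by omega, h⟩

lemma muHat_drop1_zero {n : ℕ} (hn : 3 ≤ n) {L : List (Idx n)} (hL : L.length = n + 1)
    (p : ℕ) (hp1 : 1 ≤ p) (hp : p < n + 1) (m : ZMod n)
    (h : L[p]'(by omega) = Sum.inl m) : muHat n (L.drop 1) = 0 := by
  apply muHat_eq_zero_of_inl_mem (m := m) (by rw [List.length_drop]; omega)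
  have e : (L.drop 1)[p - 1]'(by rw [List.length_drop]; omega) = Sum.inl m := by
    rw [List.getElem_drop, getElem_congr L (1 + (p - 1)) p (by omega), h]
  exact e ▸ List.getElem_mem _

lemma T2_far {n : ℕ} (hn : 3 ≤ n) {L : List (Idx n)} (hL : L.length = n + 1) (r p : ℕ)
    (hr : r < n) (hp : p < n + 1) (h1 : p ≠ r) (h2 : p ≠ r + 1) (m : ZMod n)
    (hm : L[p]'(by omega) = Sum.inl m) :
    muSlot n (L.take r) (muHat n ((L.drop r).take 2)) (L.drop (r + 2)) = 0 := by
  apply muSlot_eq_zero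
  intro b
  apply muHat_eq_zero_of_inl_mem (m := m)
  · simp only [List.length_append, List.length_cons, List.length_take, List.length_drop]
    omega
  · rcases lt_or_ge p r with hpr | hpr
    · apply List.mem_append_left
      rw [List.mem_take_iff_getElem]
      exact ⟨p, by omega, hm⟩
    · apply List.mem_append_right
      apply List.mem_cons_of_mem
      have e : (L.drop (r + 2))[p - (r + 2)]'(by rw [List.length_drop]; omega)
          = Sum.inl m := by
        rw [List.getElem_drop, getElem_congr L ((r + 2) + (p - (r + 2))) p (by omega), hm]
      exact e ▸ List.getElem_mem _

lemma T2_bothl {n : ℕ} (hn : 3 ≤ n) {L : List (Idx n)} (hL : L.length = n + 1) (r : ℕ)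
    (hr : r < n) (m m' : ZMod n) (h1 : L[r]'(by omega) = Sum.inl m)
    (h2 : L[r + 1]'(by omega) = Sum.inl m') :
    muSlot n (L.take r) (muHat n ((L.drop r).take 2)) (L.drop (r + 2)) = 0 := by
  rw [take2_drop L r (by omega), h1, h2, muHat_pair]
  simp only [basisMul]
  split_ifs
  · rw [muSlot_single]
    apply muHat_eq_zero_of_inl_mem (m := m)
    · simp only [List.length_append, List.length_cons, List.length_take, List.length_drop]
      omega
    · exact List.mem_append_right _ List.mem_cons_self
  · exact muSlot_zero n _ _

lemma T2_rr {n : ℕ} {L : List (Idx n)} (hL : L.length = n + 1) (r : ℕ) (hr : r < n)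
    (t u : ZMod n) (h1 : L[r]'(by omega) = Sum.inr t) (h2 : L[r + 1]'(by omega) = Sum.inr u) :
    muSlot n (L.take r) (muHat n ((L.drop r).take 2)) (L.drop (r + 2)) = 0 := by
  rw [take2_drop L r (by omega), h1, h2, muHat_pair]
  show muSlot n _ (0 : H n) _ = 0
  exact muSlot_zero n _ _


lemma take_succ_getElem {n : ℕ} (L : List (Idx n)) (q : ℕ) (h : q < L.length) :
    L.take (q + 1) = L.take q ++ [L[q]'h] := by
  rw [List.take_succ, List.getElem?_eq_getElem h]
  rfl

lemma core_p0 {n : ℕ} (hn : 3 ≤ n) {L : List (Idx n)} (hL : L.length = n + 1)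
    (m u : ZMod n) (h0 : L[0]'(by omega) = Sum.inl m) (h1 : L[1]'(by omega) = Sum.inr u) :
    muSlot n (L.take 0) (muHat n ((L.drop 0).take 2)) (L.drop (0 + 2)) +
      muSlot n (L.take 1) (muHat n (L.drop 1)) [] = 0 := by
  have hd1 : L.drop 1 = Sum.inr u :: L.drop 2 := by
    rw [List.drop_eq_getElem_cons (show 1 < L.length by omega), h1]
  have ht2 : (L.drop 0).take 2 = [L[0]'(by omega), L[0+1]'(by omega)] :=
    take2_drop L 0 (by omega)
  rw [ht2, getElem_congr L (0+1) 1 (by omega), h0, h1, muHat_pair, take1 L (by omega), h0,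
    List.take_zero]
  simp only [basisMul]
  by_cases hdw1 : ∃ j, L.drop 1 = diskWord n j
  · obtain ⟨j, hj⟩ := hdw1
    have huj : u = j + ((n - 1 : ℕ) : ZMod n) := by
      have e := entry_drop1 hL hj 0 (by omega)
      rw [getElem_congr L (1 + 0) 1 (by omega), h1] at e
      simp only [Nat.sub_zero] at e
      injection e
    have hcast : ((n - 1 : ℕ) : ZMod n) = -1 := by
      rw [cast_sub' (show 1 ≤ n by omega)]; push_cast; ring
    have hcond : (m = u + 1) ↔ (m = j) := by
      rw [huj, hcast]; constructor <;> intro h <;> linear_combination h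
    rw [hj, muHat_diskWord hn, muSlot_single, List.singleton_append, muHat_pair]
    simp only [basisMul]
    by_cases hmj : m = j
    · rw [if_pos (hcond.mpr hmj), if_pos hmj, muSlot_single, List.nil_append,
        show (Sum.inr u :: L.drop 2) = L.drop 1 from hd1.symm, hj, muHat_diskWord hn, hmj]
      exact H_add_self _
    · rw [if_neg (fun h => hmj (hcond.mp h)), if_neg hmj, muSlot_zero, add_zero]
  · have hz : muHat n (L.drop 1) = 0 :=
      muHat_eq_zero (by rw [List.length_drop]; omega) (fun j hj => hdw1 ⟨j, hj⟩)
    rw [hz, muSlot_zero, add_zero]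
    split_ifs with h
    · rw [muSlot_single, List.nil_append,
        show (Sum.inr u :: L.drop 2) = L.drop 1 from hd1.symm, hz]
    · exact muSlot_zero n _ _


lemma core_pn {n : ℕ} (hn : 3 ≤ n) {L : List (Idx n)} (hL : L.length = n + 1)
    (m u : ZMod n) (hm : L[n]'(by omega) = Sum.inl m)
    (hu : L[n-1]'(by omega) = Sum.inr u) :
    muSlot n (L.take (n-1)) (muHat n ((L.drop (n-1)).take 2)) (L.drop (n-1 + 2)) +
      muSlot n [] (muHat n (L.take n)) (L.drop n) = 0 := by
  have ht2 : (L.drop (n-1)).take 2 = [L[n-1]'(by omega), L[n-1+1]'(by omega)] :=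
    take2_drop L (n-1) (by omega)
  rw [ht2, getElem_congr L (n-1+1) n (by omega), hm, hu, muHat_pair,
    dropn_singleton hL, hm]
  have hdrop : L.drop (n-1+2) = [] := List.drop_eq_nil_of_le (by omega)
  have htk : L.take n = L.take (n-1) ++ [Sum.inr u] := by
    have e := take_succ_getElem L (n-1) (by omega)
    rw [show n-1+1 = n from by omega, hu] at e
    exact e
  simp only [basisMul]
  by_cases hdsk : ∃ i, L.take n = diskWord n i
  · obtain ⟨i, hi⟩ := hdsk
    have hui : u = i := by
      have e := entry_take (n := n) (by omega) hi (n-1) (by omega)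
      rw [hu, show n - 1 - (n-1) = 0 from by omega] at e
      simpa using e
    by_cases hum : u = m
    · rw [if_pos hum, muSlot_single, hdrop,
        show L.take (n-1) ++ [Sum.inr u] = L.take n from htk.symm, hi,
        muHat_diskWord hn, muSlot_single, List.nil_append, muHat_pair]
      simp only [basisMul]
      rw [if_pos (show i = m from hui ▸ hum)]
      exact H_add_self _
    · rw [if_neg hum, muSlot_zero, zero_add, hi, muHat_diskWord hn, muSlot_single,
        List.nil_append, muHat_pair]
      simp only [basisMul]
      rw [if_neg (show ¬ i = m from fun h => hum (hui.trans h))]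
  · have hz : muHat n (L.take n) = 0 :=
      muHat_eq_zero (by rw [List.length_take]; omega) (fun i hi => hdsk ⟨i, hi⟩)
    rw [hz, muSlot_zero, add_zero]
    split_ifs with h
    · rw [muSlot_single, hdrop,
        show L.take (n-1) ++ [Sum.inr u] = L.take n from htk.symm, hz]
    · exact muSlot_zero n _ _


lemma core_int {n : ℕ} (hn : 3 ≤ n) {L : List (Idx n)} (hL : L.length = n + 1)
    (p : ℕ) (hp1 : 1 ≤ p) (hpn : p < n) (m u v : ZMod n)
    (hm : L[p]'(by omega) = Sum.inl m) (hu : L[p-1]'(by omega) = Sum.inr u)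
    (hv : L[p+1]'(by omega) = Sum.inr v) :
    muSlot n (L.take (p-1)) (muHat n ((L.drop (p-1)).take 2)) (L.drop (p-1 + 2)) +
      muSlot n (L.take p) (muHat n ((L.drop p).take 2)) (L.drop (p + 2)) = 0 := by
  have ht2a : (L.drop (p-1)).take 2 = [L[p-1]'(by omega), L[p-1+1]'(by omega)] :=
    take2_drop L (p-1) (by omega)
  have ht2b : (L.drop p).take 2 = [L[p]'(by omega), L[p+1]'(by omega)] :=
    take2_drop L p (by omega)
  rw [ht2a, getElem_congr L (p-1+1) p (by omega), hm, hu, ht2b, hm, hv, muHat_pair,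
    muHat_pair]
  have hda : L.drop (p-1+2) = L.drop (p+1) := by rw [show p-1+2 = p+1 from by omega]
  have htk : L.take p = L.take (p-1) ++ [Sum.inr u] := by
    have e := take_succ_getElem L (p-1) (by omega)
    rw [show p-1+1 = p from by omega, hu] at e
    exact e
  have hdb : L.drop (p+1) = Sum.inr v :: L.drop (p+2) := by
    rw [List.drop_eq_getElem_cons (show p+1 < L.length by omega), hv]
  have hWlen : (L.take p ++ L.drop (p+1)).length = n := by
    rw [List.length_append, List.length_take, List.length_drop]
    omega
  have g1 : L.take (p-1) ++ Sum.inr u :: L.drop (p-1+2) = L.take p ++ L.drop (p+1) := by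
    rw [hda, List.append_cons, ← htk]
  have g2 : L.take p ++ Sum.inr v :: L.drop (p+2) = L.take p ++ L.drop (p+1) := by
    rw [hdb]
  simp only [basisMul]
  by_cases hdw : ∃ j, L.take p ++ L.drop (p+1) = diskWord n j
  · obtain ⟨j, hj⟩ := hdw
    have e1 : (L.take p ++ L.drop (p+1))[p-1]'(by rw [hWlen]; omega) = L[p-1]'(by omega) := by
      rw [List.getElem_append_left (by rw [List.length_take]; omega)]
      exact List.getElem_take
    have e2 : (L.take p ++ L.drop (p+1))[p]'(by rw [hWlen]; omega) = L[p+1]'(by omega) := by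
      rw [List.getElem_append_right (by rw [List.length_take]; omega)]
      rw [List.getElem_drop]
      exact getElem_congr L ((p+1) + (p - (L.take p).length)) (p+1)
        (by rw [List.length_take, hL]; omega) (by rw [List.length_take, hL]; omega)
    have b1 : (L.take p ++ L.drop (p+1))[p-1]'(by rw [hWlen]; omega)
        = Sum.inr (j + ((n-1-(p-1) : ℕ) : ZMod n)) := by
      simp only [hj]
      rw [diskWord_getElem n j (p-1) (by omega)]
    have b2 : (L.take p ++ L.drop (p+1))[p]'(by rw [hWlen]; omega)
        = Sum.inr (j + ((n-1-p : ℕ) : ZMod n)) := by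
      simp only [hj]
      rw [diskWord_getElem n j p (by omega)]
    have fu : u = j + ((n-1-(p-1) : ℕ) : ZMod n) := by
      have := (e1.symm.trans b1)
      rw [hu] at this
      injection this
    have fv : v = j + ((n-1-p : ℕ) : ZMod n) := by
      have := (e2.symm.trans b2)
      rw [hv] at this
      injection this
    have huv : u = v + 1 := by
      rw [fu, fv]
      have e : ((n-1-(p-1) : ℕ) : ZMod n) = (((n-1-p) + 1 : ℕ) : ZMod n) :=
        cast_eq_of _ _ (by omega)
      push_cast at e
      linear_combination e
    by_cases hum : u = m
    · rw [if_pos hum, if_pos (show m = v + 1 by rw [← hum, huv]), muSlot_single,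
        muSlot_single, g1, g2]
      exact H_add_self _
    · rw [if_neg hum, if_neg (fun h => hum (by rw [huv, ← h])), muSlot_zero, muSlot_zero,
        add_zero]
  · have hz : muHat n (L.take p ++ L.drop (p+1)) = 0 :=
      muHat_eq_zero (by omega) (fun j hj => hdw ⟨j, hj⟩)
    have z1 : muSlot n (L.take (p-1)) (Finsupp.single (Sum.inr u) 1) (L.drop (p-1+2)) = 0 := by
      rw [muSlot_single, g1, hz]
    have z2 : muSlot n (L.take p) (Finsupp.single (Sum.inr v) 1) (L.drop (p+2)) = 0 := by
      rw [muSlot_single, g2, hz]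
    split_ifs <;> simp [z1, z2, muSlot_zero]


lemma isRight_ex {n : ℕ} {x : Idx n} (h : x.isRight) : ∃ t, x = Sum.inr t :=
  Sum.isRight_iff.mp h

lemma isRight_of_ne {n : ℕ} {x : Idx n} (h : ∀ m, x ≠ Sum.inl m) : x.isRight := by
  rcases x with m | t
  · exact absurd rfl (h m)
  · rfl

lemma core_twol {n : ℕ} (hn : 3 ≤ n) {L : List (Idx n)} (hL : L.length = n + 1)
    (p1 q1 : ℕ) (h1 : p1 < q1) (h2 : q1 < n + 1) (a b : ZMod n)
    (ha : L[p1]'(by omega) = Sum.inl a) (hb : L[q1]'(by omega) = Sum.inl b) :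
    (∑ r ∈ Finset.range n,
      muSlot n (L.take r) (muHat n ((L.drop r).take 2)) (L.drop (r + 2))) +
    (muSlot n [] (muHat n (L.take n)) (L.drop n) +
      muSlot n (L.take 1) (muHat n (L.drop 1)) []) = 0 := by
  have z1 : muHat n (L.take n) = 0 := muHat_take_zero hn hL p1 (by omega) a ha
  have z2 : muHat n (L.drop 1) = 0 := muHat_drop1_zero hn hL q1 (by omega) (by omega) b hb
  rw [z1, z2, muSlot_zero, muSlot_zero, add_zero, add_zero]
  apply Finset.sum_eq_zero
  intro r hr
  rw [Finset.mem_range] at hr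
  by_cases hfar : p1 ≠ r ∧ p1 ≠ r + 1
  · exact T2_far hn hL r p1 hr (by omega) hfar.1 hfar.2 a ha
  · by_cases hfar2 : q1 ≠ r ∧ q1 ≠ r + 1
    · exact T2_far hn hL r q1 hr (by omega) hfar2.1 hfar2.2 b hb
    · push_neg at hfar hfar2
      have hp1 : p1 = r := by omega
      have hq1 : q1 = r + 1 := by omega
      exact T2_bothl hn hL r hr a b (hp1 ▸ ha) (hq1 ▸ hb)

lemma core {n : ℕ} (hn : 3 ≤ n) (L : List (Idx n)) (hL : L.length = n + 1) :
    (∑ r ∈ Finset.range n,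
      muSlot n (L.take r) (muHat n ((L.drop r).take 2)) (L.drop (r + 2))) +
    (muSlot n [] (muHat n (L.take n)) (L.drop n) +
      muSlot n (L.take 1) (muHat n (L.drop 1)) []) = 0 := by
  by_cases hall : ∀ q (hq : q < n + 1), (L[q]'(by omega)).isRight
  · rw [Finset.sum_eq_zero, zero_add]
    · exact core_allR hn L hL hall
    · intro r hr
      rw [Finset.mem_range] at hr
      obtain ⟨t, ht⟩ := isRight_ex (hall r (by omega))
      obtain ⟨u, hu⟩ := isRight_ex (hall (r+1) (by omega))
      exact T2_rr hL r hr t u ht hu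
  · push_neg at hall
    obtain ⟨p, hp, hpl⟩ := hall
    obtain ⟨m, hm⟩ : ∃ m, L[p]'(by omega) = Sum.inl m := by
      rcases hq : L[p]'(by omega) with m | t
      · exact ⟨m, rfl⟩
      · rw [hq] at hpl
        exact absurd rfl hpl
    by_cases huniq : ∀ q (hq : q < n + 1), q ≠ p → (L[q]'(by omega)).isRight
    · rcases Nat.eq_zero_or_pos p with rfl | hp1
      · -- p = 0
        obtain ⟨u, hu⟩ := isRight_ex (huniq 1 (by omega) (by omega))
        rw [Finset.sum_eq_single_of_mem 0 (Finset.mem_range.mpr (by omega))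
          (fun r hr hr0 => by
            rw [Finset.mem_range] at hr
            exact T2_far hn hL r 0 hr (by omega) (by omega) (by omega) m hm)]
        rw [muHat_take_zero hn hL 0 (by omega) m hm, muSlot_zero, zero_add]
        simpa only [zero_add] using core_p0 hn hL m u hm hu
      · rcases Nat.lt_or_ge p n with hpn | hpn
        · -- interior
          obtain ⟨u, hu⟩ := isRight_ex (huniq (p-1) (by omega) (by omega))
          obtain ⟨v, hv⟩ := isRight_ex (huniq (p+1) (by omega) (by omega))
          rw [Finset.sum_eq_add_of_mem (p-1) p (Finset.mem_range.mpr (by omega))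
            (Finset.mem_range.mpr (by omega)) (by omega)
            (fun r hr hrne => by
              rw [Finset.mem_range] at hr
              exact T2_far hn hL r p hr (by omega) (fun h => hrne.2 h.symm)
                (fun h => hrne.1 (by omega)) m hm)]
          rw [muHat_take_zero hn hL p (by omega) m hm, muSlot_zero, zero_add,
            muHat_drop1_zero hn hL p (by omega) (by omega) m hm, muSlot_zero]
          simpa only [add_zero] using core_int hn hL p (by omega) hpn m u v hm hu hv
        · -- p = n
          have hpn' : p = n := by omega
          subst hpn'
          obtain ⟨u, hu⟩ := isRight_ex (huniq (p-1) (by omega) (by omega))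
          rw [Finset.sum_eq_single_of_mem (p-1) (Finset.mem_range.mpr (by omega))
            (fun r hr hr0 => by
              rw [Finset.mem_range] at hr
              exact T2_far hn hL r p hr (by omega) (by omega) (by omega) m hm)]
          rw [muHat_drop1_zero hn hL p (by omega) (by omega) m hm, muSlot_zero, add_zero]
          exact core_pn hn hL m u hm hu
    · push_neg at huniq
      obtain ⟨q, hq, hqp, hql⟩ := huniq
      obtain ⟨m', hm'⟩ : ∃ m', L[q]'(by omega) = Sum.inl m' := by
        rcases hq2 : L[q]'(by omega) with m' | t
        · exact ⟨m', rfl⟩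
        · rw [hq2] at hql
          exact absurd rfl hql
      rcases Nat.lt_or_ge p q with h | h
      · exact core_twol hn hL p q h (by omega) m m' hm hm'
      · exact core_twol hn hL q p (by omega) (by omega) m' m hm' hm


/-- the operations `μ_k` of the minimal model of the Chekanov–Eliashberg
algebra of the θ_n-Legendrian satisfy the A_∞-relations (Stasheff identities): for every
word `L` of basis elements, the sum over all ways of applying an inner operation to a
consecutive subword and an outer operation to the result vanishes (over `F₂`). -/
theorem stmt17 (n : ℕ) (hn : 2 ≤ n) (L : List (Idx n)) (hL : L ≠ []) :
    ∑ r ∈ Finset.range (L.length + 1), ∑ s ∈ Finset.Icc 1 (L.length - r),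
      muSlot n (L.take r) (muHat n ((L.drop r).take s)) (L.drop (r + s)) = 0 := by
  by_cases hk3 : L.length = 3
  · -- associativity
    rw [hk3]
    rw [Finset.sum_eq_add_of_mem 0 1 (Finset.mem_range.mpr (by omega))
      (Finset.mem_range.mpr (by omega)) (by omega)
      (fun r hr hrne => by
        rw [Finset.mem_range] at hr
        apply Finset.sum_eq_zero
        intro s hs
        rw [Finset.mem_Icc] at hs
        exact T_vanish L r s (by omega) hs.1 (by omega)
          (by rintro ⟨h2, -⟩; omega) (by rintro ⟨hsn, -⟩; omega))]
    rw [Finset.sum_eq_single_of_mem 2 (Finset.mem_Icc.mpr (by omega))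
      (fun s hs hs2 => by
        rw [Finset.mem_Icc] at hs
        exact T_vanish L 0 s (by omega) hs.1 (by omega)
          (by rintro ⟨h2, -⟩; exact hs2 h2)
          (by rintro ⟨hsn, hcon⟩; omega))]
    rw [Finset.sum_eq_single_of_mem 2 (Finset.mem_Icc.mpr (by omega))
      (fun s hs hs2 => by
        rw [Finset.mem_Icc] at hs
        exact T_vanish L 1 s (by omega) hs.1 (by omega)
          (by rintro ⟨h2, -⟩; exact hs2 h2)
          (by rintro ⟨hsn, hcon⟩; omega))]
    obtain ⟨a, b, c, rfl⟩ := List.length_eq_three.mp hk3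
    exact assoc3 a b c
  by_cases hkn : L.length = n + 1
  · have hn3 : 3 ≤ n := by omega
    rw [hkn]
    have hsplit : ∀ r ∈ Finset.range (n + 1 + 1),
        (∑ s ∈ Finset.Icc 1 (n + 1 - r),
          muSlot n (L.take r) (muHat n ((L.drop r).take s)) (L.drop (r + s)))
        = (∑ s ∈ Finset.Icc 1 (n + 1 - r),
            if s = 2 then
              muSlot n (L.take r) (muHat n ((L.drop r).take s)) (L.drop (r + s)) else 0)
          + (∑ s ∈ Finset.Icc 1 (n + 1 - r),
            if s = n then
              muSlot n (L.take r) (muHat n ((L.drop r).take s)) (L.drop (r + s)) else 0) := by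
      intro r hr
      rw [Finset.mem_range] at hr
      rw [← Finset.sum_add_distrib]
      apply Finset.sum_congr rfl
      intro s hs
      rw [Finset.mem_Icc] at hs
      by_cases h2 : s = 2
      · rw [if_pos h2, if_neg (show ¬ s = n by omega), add_zero]
      · rw [if_neg h2]
        by_cases hsn : s = n
        · rw [if_pos hsn, zero_add]
        · rw [if_neg hsn, add_zero]
          exact T_vanish L r s (by omega) hs.1 (by omega)
            (by rintro ⟨hc, -⟩; exact h2 hc) (by rintro ⟨hc, -⟩; exact hsn hc)
    rw [Finset.sum_congr rfl hsplit, Finset.sum_add_distrib]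
    have hA : (∑ r ∈ Finset.range (n + 1 + 1), ∑ s ∈ Finset.Icc 1 (n + 1 - r),
          if s = 2 then
            muSlot n (L.take r) (muHat n ((L.drop r).take s)) (L.drop (r + s)) else 0)
        = ∑ r ∈ Finset.range n,
            muSlot n (L.take r) (muHat n ((L.drop r).take 2)) (L.drop (r + 2)) := by
      rw [Finset.sum_congr rfl (fun r _ => Finset.sum_ite_eq' (Finset.Icc 1 (n + 1 - r)) 2
        (fun s => muSlot n (L.take r) (muHat n ((L.drop r).take s)) (L.drop (r + s))))]
      rw [← Finset.sum_subset (Finset.range_subset_range.mpr (show n ≤ n + 1 + 1 by omega))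
        (fun r hr hnr => by
          rw [Finset.mem_range] at hnr
          rw [if_neg]
          rw [Finset.mem_Icc]
          rw [Finset.mem_range] at hr
          omega)]
      apply Finset.sum_congr rfl
      intro r hr
      rw [Finset.mem_range] at hr
      rw [if_pos (Finset.mem_Icc.mpr (by omega))]
    have hB : (∑ r ∈ Finset.range (n + 1 + 1), ∑ s ∈ Finset.Icc 1 (n + 1 - r),
          if s = n then
            muSlot n (L.take r) (muHat n ((L.drop r).take s)) (L.drop (r + s)) else 0)
        = muSlot n (L.take 0) (muHat n ((L.drop 0).take n)) (L.drop (0 + n)) +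
          muSlot n (L.take 1) (muHat n ((L.drop 1).take n)) (L.drop (1 + n)) := by
      rw [Finset.sum_congr rfl (fun r _ => Finset.sum_ite_eq' (Finset.Icc 1 (n + 1 - r)) n
        (fun s => muSlot n (L.take r) (muHat n ((L.drop r).take s)) (L.drop (r + s))))]
      rw [← Finset.sum_subset (Finset.range_subset_range.mpr (show 2 ≤ n + 1 + 1 by omega))
        (fun r hr hnr => by
          rw [Finset.mem_range] at hnr
          rw [if_neg]
          rw [Finset.mem_Icc]
          rw [Finset.mem_range] at hr
          omega)]
      rw [Finset.sum_range_succ, Finset.sum_range_succ, Finset.sum_range_zero, zero_add]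
      rw [if_pos (Finset.mem_Icc.mpr (by omega)), if_pos (Finset.mem_Icc.mpr (by omega))]
    rw [hA, hB]
    have e0 : L.take 0 = ([] : List (Idx n)) := List.take_zero
    have e1 : L.drop 0 = L := List.drop_zero
    have e2 : L.drop (0 + n) = L.drop n := by rw [Nat.zero_add]
    have e3 : (L.drop 1).take n = L.drop 1 :=
      List.take_of_length_le (by rw [List.length_drop]; omega)
    have e4 : L.drop (1 + n) = ([] : List (Idx n)) := List.drop_eq_nil_of_le (by omega)
    rw [e0, e1, e2, e3, e4]
    exact core hn3 L hkn
  · apply Finset.sum_eq_zero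
    intro r hr
    apply Finset.sum_eq_zero
    intro s hs
    rw [Finset.mem_range] at hr
    rw [Finset.mem_Icc] at hs
    exact T_vanish L r s (by omega) hs.1 hs.2
      (fun h => by rcases h.2 with h' | h'; exacts [hk3 h', hkn h'])
      (fun h => hkn h.2)


end Stmt17
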